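/- Let k be a perfect field of characteristic p > 0, let R = k[x_1, …, x_m] be a polynomial ring, let q = p^γ be a power of p, and let l ≥ 1. If N ⊆ R^{⊕l} is an R-submodule generated by finitely many vectors each of whose entries has total degree at most d, then for every e ≥ 1 the submodule N^{[1/q^e]} is generated by finitely many vectors each of whose entries has total degree at most ⌊d/q^e⌋. -/

import Mathlib

open MvPolynomial
set_option linter.unusedSectionVars false

/-- The `Q`-th bracket power of a submodule `N ⊆ R^{⊕l}`: the submodule generated by
the entrywise `Q`-th powers of elements of `N`. -/
def brkPow {R : Type*} [CommRing R] {l : ℕ} (Q : ℕ) (N : Submodule R (Fin l → R)) :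
    Submodule R (Fin l → R) :=
  Submodule.span R ((fun u : Fin l → R => fun j' => u j' ^ Q) '' ↑N)

/-- `N^{[1/Q]}`: the intersection of all submodules `N'` with `N ⊆ N'^{[Q]}`. -/
def invBrkPow {R : Type*} [CommRing R] {l : ℕ} (Q : ℕ) (N : Submodule R (Fin l → R)) :
    Submodule R (Fin l → R) :=
  sInf {N' : Submodule R (Fin l → R) | N ≤ brkPow Q N'}


section Aux

variable {k : Type*} [Field k] (p : ℕ) [Fact p.Prime] [CharP k p] [ExpChar k p]
  [PerfectRing k p] {m : ℕ}

/-- `Q`-th root on `k`. -/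
noncomputable def rt (E : ℕ) : k ≃+* k := (iterateFrobeniusEquiv k p E).symm

lemma rt_pow (E : ℕ) (a : k) : rt p E a ^ p ^ E = a := by
  have := (iterateFrobeniusEquiv k p E).apply_symm_apply a
  rwa [iterateFrobeniusEquiv_def] at this

lemma rt_pow' (E : ℕ) (a : k) : rt p E (a ^ p ^ E) = a := by
  have := (iterateFrobeniusEquiv k p E).symm_apply_apply a
  rwa [iterateFrobeniusEquiv_def] at this

/-- componentwise division of exponents -/
noncomputable def bdiv (Q : ℕ) (b : Fin m →₀ ℕ) : Fin m →₀ ℕ :=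
  Finsupp.mapRange (· / Q) (Nat.zero_div _) b

/-- componentwise remainder of exponents -/
noncomputable def bmod (Q : ℕ) (b : Fin m →₀ ℕ) : Fin m →₀ ℕ :=
  Finsupp.mapRange (· % Q) (Nat.zero_mod _) b

lemma bdiv_add_bmod (Q : ℕ) (b : Fin m →₀ ℕ) : Q • bdiv Q b + bmod Q b = b := by
  ext i
  simp only [Finsupp.add_apply, Finsupp.smul_apply, bdiv, bmod, Finsupp.mapRange_apply,
    smul_eq_mul]
  exact Nat.div_add_mod _ _

lemma bmod_add_smul (Q : ℕ) (b c : Fin m →₀ ℕ) : bmod Q (b + Q • c) = bmod Q b := by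
  ext i
  simp only [bmod, Finsupp.mapRange_apply, Finsupp.add_apply, Finsupp.smul_apply, smul_eq_mul]
  exact Nat.add_mul_mod_self_left _ _ _

lemma bdiv_add_smul (Q : ℕ) (hQ : 0 < Q) (b c : Fin m →₀ ℕ) :
    bdiv Q (b + Q • c) = bdiv Q b + c := by
  ext i
  simp only [bdiv, Finsupp.mapRange_apply, Finsupp.add_apply, Finsupp.smul_apply, smul_eq_mul]
  exact Nat.add_mul_div_left _ _ hQ


variable [DecidableEq (Fin m →₀ ℕ)]

/-- the `α`-th Frobenius component of a polynomial -/
noncomputable def rho (E : ℕ) (α : Fin m →₀ ℕ) (f : MvPolynomial (Fin m) k) :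
    MvPolynomial (Fin m) k :=
  ∑ b ∈ f.support,
    if bmod (p ^ E) b = α then monomial (bdiv (p ^ E) b) (rt p E (coeff b f)) else 0

lemma rho_eq_sum_subset (E : ℕ) (α : Fin m →₀ ℕ) (f : MvPolynomial (Fin m) k)
    (T : Finset (Fin m →₀ ℕ)) (hT : f.support ⊆ T) :
    rho p E α f = ∑ b ∈ T,
      if bmod (p ^ E) b = α then monomial (bdiv (p ^ E) b) (rt p E (coeff b f)) else 0 := by
  refine Finset.sum_subset hT fun b _ hb => ?_
  rw [notMem_support_iff.mp hb]
  simp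

lemma rho_zero (E : ℕ) (α : Fin m →₀ ℕ) : rho p E α (0 : MvPolynomial (Fin m) k) = 0 := by
  simp [rho]

lemma rho_add (E : ℕ) (α : Fin m →₀ ℕ) (f g : MvPolynomial (Fin m) k) :
    rho p E α (f + g) = rho p E α f + rho p E α g := by
  classical
  set T := (f + g).support ∪ f.support ∪ g.support with hTdef
  rw [rho_eq_sum_subset p E α (f + g) T (by intro b hb; simp [hTdef, hb]),
    rho_eq_sum_subset p E α f T (by intro b hb; simp [hTdef, hb]),
    rho_eq_sum_subset p E α g T (by intro b hb; simp [hTdef, hb]), ← Finset.sum_add_distrib]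
  refine Finset.sum_congr rfl fun b _ => ?_
  split <;> simp [coeff_add, map_add]

lemma rho_sum (E : ℕ) (α : Fin m →₀ ℕ) {ι : Type*} (s : Finset ι)
    (g : ι → MvPolynomial (Fin m) k) :
    rho p E α (∑ i ∈ s, g i) = ∑ i ∈ s, rho p E α (g i) := by
  classical
  induction s using Finset.induction_on with
  | empty => simp [rho_zero]
  | insert a s2 hx ih => rw [Finset.sum_insert hx, Finset.sum_insert hx, rho_add, ih]

lemma rho_monomial (E : ℕ) (α b : Fin m →₀ ℕ) (a : k) :
    rho p E α (monomial b a) =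
      if bmod (p ^ E) b = α then monomial (bdiv (p ^ E) b) (rt p E a) else 0 := by
  rw [rho_eq_sum_subset p E α _ {b} (support_monomial_subset), Finset.sum_singleton,
    coeff_monomial]
  simp


lemma pow_expand (E : ℕ) (g : MvPolynomial (Fin m) k) :
    g ^ p ^ E = ∑ c ∈ g.support, monomial (p ^ E • c) (coeff c g ^ p ^ E) := by
  conv_lhs => rw [g.as_sum]
  rw [sum_pow_char_pow]
  refine Finset.sum_congr rfl fun c _ => ?_
  rw [monomial_pow]

lemma rho_mul_monomial (E : ℕ) (α c : Fin m →₀ ℕ) (a : k) (f : MvPolynomial (Fin m) k) :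
    rho p E α (f * monomial (p ^ E • c) (a ^ p ^ E)) = rho p E α f * monomial c a := by
  have hQ : 0 < p ^ E := pow_pos (Fact.out (p := p.Prime)).pos E
  conv_lhs => rw [f.as_sum, Finset.sum_mul, rho_sum]
  rw [rho, Finset.sum_mul]
  refine Finset.sum_congr rfl fun b _ => ?_
  rw [monomial_mul, rho_monomial, bmod_add_smul, bdiv_add_smul _ hQ, map_mul, rt_pow']
  split
  · rw [monomial_mul]
  · rw [zero_mul]

lemma rho_mul_pow (E : ℕ) (α : Fin m →₀ ℕ) (f g : MvPolynomial (Fin m) k) :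
    rho p E α (f * g ^ p ^ E) = rho p E α f * g := by
  rw [pow_expand, Finset.mul_sum, rho_sum]
  rw [Finset.sum_congr rfl fun c _ => rho_mul_monomial p E α c (coeff c g) f]
  rw [← Finset.mul_sum, ← g.as_sum]

lemma rho_degree (E : ℕ) (α : Fin m →₀ ℕ) (f : MvPolynomial (Fin m) k) :
    (rho p E α f).totalDegree ≤ f.totalDegree / p ^ E := by
  have hQ : 0 < p ^ E := pow_pos (Fact.out (p := p.Prime)).pos E
  refine (totalDegree_finset_sum _ _).trans (Finset.sup_le fun b hb => ?_)
  split
  · refine (totalDegree_monomial_le _ _).trans ?_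
    rw [Nat.le_div_iff_mul_le hQ]
    have h1 : (bdiv (p ^ E) b).sum (fun _ e => e) * p ^ E ≤ b.sum fun _ e => e := by
      rw [Finsupp.sum_fintype _ _ (fun _ => rfl), Finsupp.sum_fintype _ _ (fun _ => rfl),
        Finset.sum_mul]
      refine Finset.sum_le_sum fun i _ => ?_
      simp only [bdiv, Finsupp.mapRange_apply]
      exact Nat.div_mul_le_self _ _
    exact h1.trans (le_totalDegree hb)
  · simp

lemma rho_not_mem (E : ℕ) (α : Fin m →₀ ℕ) (f : MvPolynomial (Fin m) k)
    (hα : α ∉ f.support.image (bmod (p ^ E))) : rho p E α f = 0 := by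
  refine Finset.sum_eq_zero fun b hb => ?_
  rw [if_neg]
  intro h
  exact hα (Finset.mem_image.mpr ⟨b, hb, h⟩)

lemma decomp (E : ℕ) (f : MvPolynomial (Fin m) k) (T : Finset (Fin m →₀ ℕ))
    (hT : f.support.image (bmod (p ^ E)) ⊆ T) :
    f = ∑ α ∈ T, (rho p E α f) ^ p ^ E * monomial α 1 := by
  have hQ : 0 < p ^ E := pow_pos (Fact.out (p := p.Prime)).pos E
  rw [← Finset.sum_subset hT (by
    intro α _ hα
    rw [rho_not_mem p E α f hα, zero_pow hQ.ne', zero_mul])]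
  conv_lhs => rw [f.as_sum]
  rw [← Finset.sum_fiberwise_of_maps_to (g := bmod (p ^ E))
    (fun b hb => Finset.mem_image_of_mem _ hb) (fun b => monomial b (coeff b f))]
  refine Finset.sum_congr rfl fun α hα => ?_
  rw [rho, sum_pow_char_pow, Finset.sum_mul, Finset.sum_filter]
  refine Finset.sum_congr rfl fun b _ => ?_
  split
  · rename_i h
    rw [monomial_pow, monomial_mul, rt_pow, mul_one]
    congr 1
    rw [← h, bdiv_add_bmod]
  · rw [zero_pow hQ.ne', zero_mul]

end Aux

theorem key_thm (k : Type*) [Field k] (p : ℕ) [Fact p.Prime] [CharP k p]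
    [ExpChar k p] [PerfectRing k p] (m E : ℕ)
    (l : ℕ) (d : ℕ) (n : ℕ)
    (v : Fin n → Fin l → MvPolynomial (Fin m) k)
    (hv : ∀ i j, (v i j).totalDegree ≤ d) :
    ∃ (n' : ℕ) (w : Fin n' → Fin l → MvPolynomial (Fin m) k),
      (∀ i j, (w i j).totalDegree ≤ d / p ^ E) ∧
      invBrkPow (p ^ E) (Submodule.span (MvPolynomial (Fin m) k) (Set.range v))
        = Submodule.span (MvPolynomial (Fin m) k) (Set.range w) := by
  classical
  set T : Finset (Fin m →₀ ℕ) :=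
    Finset.univ.biUnion (fun ij : Fin n × Fin l => (v ij.1 ij.2).support.image (bmod (p ^ E)))
    with hT
  set F : Fin n × {x // x ∈ T} → Fin l → MvPolynomial (Fin m) k :=
    fun t j => rho p E t.2.1 (v t.1 j) with hF
  refine ⟨Fintype.card (Fin n × {x // x ∈ T}),
    F ∘ (Fintype.equivFin (Fin n × {x // x ∈ T})).symm, ?_, ?_⟩
  · intro i j
    exact (rho_degree p E _ _).trans (Nat.div_le_div_right (hv _ j))
  have hrange : Set.range (F ∘ (Fintype.equivFin (Fin n × {x // x ∈ T})).symm) = Set.range F :=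
    (Fintype.equivFin (Fin n × {x // x ∈ T})).symm.surjective.range_comp F
  rw [hrange]
  -- key decomposition of each generator
  have key1 : ∀ i : Fin n, v i =
      ∑ α ∈ T, (monomial α (1 : k)) • (fun j => (rho p E α (v i j)) ^ p ^ E) := by
    intro i
    funext j
    rw [Finset.sum_apply]
    have := decomp p E (v i j) T (by
      intro α hα
      exact Finset.mem_biUnion.mpr ⟨(i, j), Finset.mem_univ _, hα⟩)
    rw [this]
    refine Finset.sum_congr rfl fun α _ => ?_
    rw [Pi.smul_apply, smul_eq_mul, mul_comm]
  apply le_antisymm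
  · -- invBrkPow ≤ span
    apply sInf_le
    show Submodule.span _ (Set.range v) ≤
      brkPow (p ^ E) (Submodule.span (MvPolynomial (Fin m) k) (Set.range F))
    rw [Submodule.span_le]
    rintro _ ⟨i, rfl⟩
    rw [key1 i]
    refine Submodule.sum_mem _ fun α hα => Submodule.smul_mem _ _ (Submodule.subset_span ?_)
    exact ⟨fun j => rho p E α (v i j),
      Submodule.subset_span (Set.mem_range_self (⟨i, ⟨α, hα⟩⟩ : Fin n × {x // x ∈ T})), rfl⟩
  · -- span ≤ invBrkPow
    refine le_sInf fun N' hN' => ?_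
    rw [Submodule.span_le]
    rintro _ ⟨⟨i, α, hα⟩, rfl⟩
    have hvN : v i ∈ brkPow (p ^ E) N' := hN' (Submodule.subset_span (Set.mem_range_self i))
    have main : ∀ x ∈ brkPow (p ^ E) N', ∀ r : MvPolynomial (Fin m) k, ∀ β : Fin m →₀ ℕ,
        (fun j => rho p E β (r * x j)) ∈ N' := by
      intro x hx
      rw [brkPow] at hx
      induction hx using Submodule.span_induction with
      | mem y hy =>
        obtain ⟨u, huN', rfl⟩ := hy
        intro r β
        have h2 : (fun j => rho p E β (r * (u j) ^ p ^ E)) = (rho p E β r) • u := by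
          funext j
          rw [Pi.smul_apply, smul_eq_mul, rho_mul_pow]
        rw [h2]
        exact Submodule.smul_mem _ _ huN'
      | zero =>
        intro r β
        have h2 : (fun j => rho p E β (r * (0 : Fin l → MvPolynomial (Fin m) k) j)) =
            (0 : Fin l → MvPolynomial (Fin m) k) := by
          funext j
          simp [rho_zero]
        rw [h2]
        exact Submodule.zero_mem _
      | add x y hx hy ihx ihy =>
        intro r β
        have h2 : (fun j => rho p E β (r * (x + y) j)) =
            (fun j => rho p E β (r * x j)) + (fun j => rho p E β (r * y j)) := by
          funext j
          rw [Pi.add_apply, Pi.add_apply, mul_add, rho_add]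
        rw [h2]
        exact Submodule.add_mem _ (ihx r β) (ihy r β)
      | smul s x hx ih =>
        intro r β
        have h2 : (fun j => rho p E β (r * (s • x) j)) =
            fun j => rho p E β ((r * s) * x j) := by
          funext j
          rw [Pi.smul_apply, smul_eq_mul]; congr 1; ring
        rw [h2]
        exact ih (r * s) β
    have hfin := main (v i) hvN 1 α
    simpa using hfin

theorem stmt_6 (k : Type*) [Field k] (p : ℕ) [Fact p.Prime] [CharP k p]
    [ExpChar k p] [PerfectRing k p]
    (m : ℕ) (γ : ℕ) (hγ : 1 ≤ γ) (q : ℕ) (hq : q = p ^ γ)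
    (l : ℕ) (hl : 1 ≤ l) (d : ℕ) (n : ℕ)
    (v : Fin n → Fin l → MvPolynomial (Fin m) k)
    (hv : ∀ i j, (v i j).totalDegree ≤ d)
    (e : ℕ) (he : 1 ≤ e) :
    ∃ (n' : ℕ) (w : Fin n' → Fin l → MvPolynomial (Fin m) k),
      (∀ i j, (w i j).totalDegree ≤ d / q ^ e) ∧
      invBrkPow (q ^ e) (Submodule.span (MvPolynomial (Fin m) k) (Set.range v))
        = Submodule.span (MvPolynomial (Fin m) k) (Set.range w) := by
  subst hq
  rw [← pow_mul]
  exact key_thm k p m (γ * e) l d n v hv
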